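/- For every real ω > 0, every real γ > 0, and all m, n ∈ ℕ, the matrix-element resolution-of-identity formula for the γ-deformed coherent states holds: (1/π) ∫_{z ∈ ℂ} z^m · (conj z)^n · |z|^{2(γ−1)} / (Γ(γ) · ω^γ) · exp(−|z|²/ω) dA(z) = ωⁿ · Γ(γ + n)/Γ(γ) if m = n, and = 0 if m ≠ n, where dA is Lebesgue measure (volume) on ℂ. -/

import Mathlib

open MeasureTheory Real Set

/-- Matrix-element form of the resolution of the identity for `γ`-deformed coherent states:
`(1/π) ∫_ℂ zᵐ z̄ⁿ |z|^(2(γ-1))/(Γ(γ) ω^γ) exp(-|z|²/ω) dA(z)` equals `ωⁿ Γ(γ+n)/Γ(γ)`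
if `m = n` and `0` otherwise. -/
theorem gamma_deformed_CS_resolution_of_identity (ω γ : ℝ) (hω : 0 < ω) (hγ : 0 < γ)
    (m n : ℕ) :
    (1 / (Real.pi : ℂ)) * ∫ z : ℂ,
        z ^ m * (starRingEnd ℂ z) ^ n *
          (((‖z‖) ^ (2 * (γ - 1)) / (Real.Gamma γ * ω ^ γ) *
              Real.exp (-(‖z‖) ^ 2 / ω) : ℝ) : ℂ)
      = if m = n then ((ω ^ n * (Real.Gamma (γ + n) / Real.Gamma γ) : ℝ) : ℂ) else 0 := by
  have hΓ : 0 < Real.Gamma γ := Real.Gamma_pos_of_pos hγ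
  set C : ℝ := Real.Gamma γ * ω ^ γ with hC
  have hCpos : 0 < C := mul_pos hΓ (Real.rpow_pos_of_pos hω γ)
  set fr : ℝ → ℂ := fun r =>
    ((r * (r ^ (m + n) * (r ^ (2 * (γ - 1)) / C * Real.exp (-r ^ 2 / ω))) : ℝ) : ℂ) with hfr
  set fθ : ℝ → ℂ := fun θ => Complex.exp (((m : ℂ) - n) * θ * Complex.I) with hfθ
  have key : (∫ z : ℂ,
        z ^ m * (starRingEnd ℂ z) ^ n *
          (((‖z‖) ^ (2 * (γ - 1)) / C *
              Real.exp (-(‖z‖) ^ 2 / ω) : ℝ) : ℂ))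
      = (∫ r in Ioi (0 : ℝ), fr r) * ∫ θ in Ioo (-π) π, fθ θ := by
    rw [← Complex.integral_comp_polarCoord_symm, polarCoord_target]
    rw [show (∫ r in Ioi (0 : ℝ), fr r) * ∫ θ in Ioo (-π) π, fθ θ
        = ∫ p in Ioi (0 : ℝ) ×ˢ Ioo (-π) π, fr p.1 * fθ p.2 from by
      rw [Measure.volume_eq_prod, setIntegral_prod_mul]]
    refine setIntegral_congr_fun (measurableSet_Ioi.prod measurableSet_Ioo) fun p hp => ?_
    obtain ⟨hp1, -⟩ := hp
    rw [mem_Ioi] at hp1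
    rw [Complex.norm_polarCoord_symm, abs_of_pos hp1]
    have hsymm : Complex.polarCoord.symm p = (p.1 : ℂ) * Complex.exp (p.2 * Complex.I) := by
      rw [Complex.polarCoord_symm_apply, Complex.exp_mul_I, Complex.ofReal_cos,
        Complex.ofReal_sin]
    rw [hsymm, map_mul, ← Complex.exp_conj, map_mul, Complex.conj_ofReal, Complex.conj_I,
      Complex.conj_ofReal, mul_pow, mul_pow, ← Complex.exp_nat_mul, ← Complex.exp_nat_mul]
    simp only [hfr, hfθ, Complex.real_smul]
    push_cast
    rw [show ((m : ℂ) * ((p.2 : ℂ) * Complex.I) : ℂ) = (m : ℂ) * p.2 * Complex.I by ring,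
      show ((n : ℂ) * ((p.2 : ℂ) * -Complex.I) : ℂ) = -((n : ℂ) * p.2 * Complex.I) by ring]
    rw [show ((m : ℂ) - n) * p.2 * Complex.I
        = (m : ℂ) * p.2 * Complex.I + -((n : ℂ) * p.2 * Complex.I) by ring, Complex.exp_add]
    ring
  have hang : (∫ θ in Ioo (-π) π, fθ θ) = if m = n then ((2 * π : ℝ) : ℂ) else 0 := by
    split_ifs with h
    · subst h
      simp only [hfθ, sub_self, zero_mul, Complex.exp_zero]
      rw [setIntegral_const]
      simp [Real.volume_Ioo, two_mul, Real.pi_pos.le]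
    · have hc : ((m : ℂ) - n) * Complex.I ≠ 0 := by
        refine mul_ne_zero (sub_ne_zero.mpr ?_) Complex.I_ne_zero
        exact_mod_cast h
      rw [← integral_Ioc_eq_integral_Ioo,
        ← intervalIntegral.integral_of_le (by linarith [Real.pi_pos] : -π ≤ π)]
      simp only [hfθ]
      have : ∀ θ : ℝ, ((m : ℂ) - n) * θ * Complex.I = (((m : ℂ) - n) * Complex.I) * θ := by
        intro θ; ring
      simp_rw [this]
      rw [integral_exp_mul_complex hc]
      have heq : Complex.exp ((((m : ℂ) - n) * Complex.I) * π)
          = Complex.exp ((((m : ℂ) - n) * Complex.I) * (-π : ℝ)) := by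
        have hz : ((m : ℂ) - n) = (((m : ℤ) - (n : ℤ) : ℤ) : ℂ) := by push_cast; ring
        rw [show ((((m : ℂ) - n) * Complex.I) * π : ℂ)
            = (((m : ℂ) - n) * Complex.I) * ((-π : ℝ) : ℂ) + ((m : ℂ) - n) * (2 * π * Complex.I) by
          push_cast; ring, Complex.exp_add, hz, Complex.exp_int_mul_two_pi_mul_I, mul_one]
      rw [heq, sub_self, zero_div]
  rw [key, hang]
  split_ifs with h
  · subst h
    have hrad : (∫ r in Ioi (0 : ℝ),
        (r * (r ^ (m + m) * (r ^ (2 * (γ - 1)) / C * Real.exp (-r ^ 2 / ω)))))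
        = C⁻¹ * (ω ^ (γ + m) * (1 / 2) * Real.Gamma (γ + m)) := by
      rw [setIntegral_congr_fun measurableSet_Ioi (g := fun r : ℝ =>
          C⁻¹ * (r ^ (2 * γ + 2 * m - 1 : ℝ) * Real.exp (-ω⁻¹ * r ^ (2 : ℝ)))) ?_,
        integral_const_mul, integral_rpow_mul_exp_neg_mul_rpow two_pos
          (by nlinarith : (-1 : ℝ) < 2 * γ + 2 * m - 1) (inv_pos.mpr hω)]
      · rw [show (-(2 * γ + 2 * m - 1 + 1) / 2 : ℝ) = -(γ + m) by ring,
          show ((2 * γ + 2 * m - 1 + 1) / 2 : ℝ) = γ + m by ring,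
          Real.inv_rpow hω.le, Real.rpow_neg hω.le, inv_inv]
      · intro r hr
        rw [mem_Ioi] at hr
        have h1 : (r : ℝ) ^ (m + m) = r ^ ((m + m : ℕ) : ℝ) := (Real.rpow_natCast r _).symm
        have h2 : (r : ℝ) ^ (2 : ℕ) = r ^ ((2 : ℕ) : ℝ) := (Real.rpow_natCast r _).symm
        have h3 : r = r ^ (1 : ℝ) := (Real.rpow_one r).symm
        dsimp only
        rw [h1]
        nth_rewrite 1 [h3]
        rw [show -r ^ 2 / ω = -ω⁻¹ * r ^ (2 : ℕ) by field_simp, h2,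
          show ((2 : ℕ) : ℝ) = (2 : ℝ) by norm_num,
          show (2 * γ + 2 * m - 1 : ℝ) = 1 + ((m + m : ℕ) : ℝ) + 2 * (γ - 1) by push_cast; ring,
          Real.rpow_add hr, Real.rpow_add hr]
        field_simp
    rw [show (∫ r in Ioi (0 : ℝ), fr r)
        = ((∫ r in Ioi (0 : ℝ),
            (r * (r ^ (m + m) * (r ^ (2 * (γ - 1)) / C * Real.exp (-r ^ 2 / ω)))) : ℝ) : ℂ) from
      integral_ofReal, hrad]
    have hfin : (1 / π) * (C⁻¹ * (ω ^ (γ + m) * (1 / 2) * Real.Gamma (γ + m)) * (2 * π))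
        = ω ^ m * (Real.Gamma (γ + m) / Real.Gamma γ) := by
      have hωpow : ω ^ (γ + m) = ω ^ γ * ω ^ m := by
        rw [Real.rpow_add hω, Real.rpow_natCast]
      rw [hωpow, hC]
      field_simp
    rw [← hfin]
    push_cast
    ring
  · rw [mul_zero, mul_zero]
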